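/- Let n ≥ 2 and let A be an n×n complex matrix all of whose entries vanish except possibly the entries A_{k+1,k} for 1 ≤ k ≤ n−1 and the entry A_{1,n} (a cyclic matrix). Set a_k = |A_{k+1,k}|² for 1 ≤ k ≤ n−1 and a_n = |A_{1,n}|², and read indices modulo n (so a_0 = a_n). Then tr(A·Aᴴ) = ∑_{k=1}^{n} a_k and tr([A,Aᴴ]·[A,Aᴴ]) = ∑_{k=1}^{n} (a_k − a_{k−1})². (This identity is the basis of the curvature formula K_σ = −∑_k(a_k−a_{k−1})²/(2n·(∑_k a_k)²) for cyclic Higgs bundles.) -/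

import Mathlib

open Matrix

/-- For a cyclic `n×n` matrix `A` (supported on positions `(k+1,k)` cyclically,
i.e. on `(k+1,k)`, `1 ≤ k ≤ n−1`, and `(1,n)`), with `a_k = |A_{k+1,k}|²` (indices mod `n`),
one has `tr(A·Aᴴ) = ∑ a_k` and `tr([A,Aᴴ]·[A,Aᴴ]) = ∑ (a_k − a_{k−1})²`. -/
theorem stmt3 (n : ℕ) (hn : 2 ≤ n) [NeZero n] (A : Matrix (Fin n) (Fin n) ℂ)
    (hA : ∀ i j : Fin n, i ≠ j + 1 → A i j = 0)
    (a : Fin n → ℝ) (ha : ∀ k : Fin n, a k = ‖A (k + 1) k‖ ^ 2) :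
    (A * Aᴴ).trace = ((∑ k, a k : ℝ) : ℂ) ∧
    ((A * Aᴴ - Aᴴ * A) * (A * Aᴴ - Aᴴ * A)).trace =
      ((∑ k : Fin n, (a k - a (k - 1)) ^ 2 : ℝ) : ℂ) := by
  have hzz : ∀ z : ℂ, z * star z = ((‖z‖ ^ 2 : ℝ) : ℂ) := by
    intro z
    rw [show star z = (starRingEnd ℂ) z from rfl, Complex.mul_conj]
    norm_cast
    rw [Complex.normSq_eq_norm_sq]
  have hB : A * Aᴴ = Matrix.diagonal (fun i => ((a (i - 1) : ℝ) : ℂ)) := by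
    ext i j
    rw [mul_apply, Matrix.diagonal_apply]
    rcases eq_or_ne i j with rfl | hij
    · rw [if_pos rfl]
      rw [Finset.sum_eq_single (i - 1)]
      · rw [conjTranspose_apply, hzz, ha (i - 1), sub_add_cancel]
      · intro k _ hk
        rw [hA i k (fun h => hk (by rw [h, add_sub_cancel_right])), zero_mul]
      · intro h; exact absurd (Finset.mem_univ _) h
    · rw [if_neg hij]
      apply Finset.sum_eq_zero
      intro k _
      rcases eq_or_ne i (k + 1) with hi | hi
      · rw [conjTranspose_apply, hA j k (fun h => hij (hi.trans h.symm)), star_zero,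
          mul_zero]
      · rw [hA i k hi, zero_mul]
  have hC : Aᴴ * A = Matrix.diagonal (fun i => ((a i : ℝ) : ℂ)) := by
    ext i j
    rw [mul_apply, Matrix.diagonal_apply]
    rcases eq_or_ne i j with rfl | hij
    · rw [if_pos rfl]
      rw [Finset.sum_eq_single (i + 1)]
      · rw [conjTranspose_apply, mul_comm, hzz, ha i]
      · intro k _ hk
        rw [hA k i (fun h => hk h), mul_zero]
      · intro h; exact absurd (Finset.mem_univ _) h
    · rw [if_neg hij]
      apply Finset.sum_eq_zero
      intro k _
      rcases eq_or_ne k (i + 1) with hk | hk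
      · rw [hA k j (fun h => hij (by rw [← add_left_inj 1, ← hk, h])), mul_zero]
      · rw [conjTranspose_apply, hA k i hk, star_zero, zero_mul]
  constructor
  · rw [hB, trace_diagonal]
    rw [Complex.ofReal_sum]
    exact Fintype.sum_equiv (Equiv.subRight (1 : Fin n)) _ _ (fun i => rfl)
  · have hdsub : (Matrix.diagonal (fun i => ((a (i - 1) : ℝ) : ℂ)) -
        Matrix.diagonal (fun i => ((a i : ℝ) : ℂ))) =
        Matrix.diagonal (fun i : Fin n => ((a (i - 1) : ℝ) : ℂ) - ((a i : ℝ) : ℂ)) := by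
      ext i j
      by_cases h : i = j <;> simp [Matrix.diagonal_apply, h]
    rw [hB, hC, hdsub, diagonal_mul_diagonal, trace_diagonal]
    push_cast
    apply Fintype.sum_congr
    intro i
    push_cast
    ring
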